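/- Let X ⊆ ℝ^d, σ ∈ ℝ^d, γ ≥ 0, T ≥ 1, let f_1, …, f_T : X → ℝ and g_1, …, g_T : X → ℝ with g_1 = 0. Suppose x_1, …, x_T ∈ X are such that for each t, Σ_{i=1}^{t−1} f_i(x_t) + g_t(x_t) − ⟨σ, x_t⟩ ≤ inf_{x∈X} ( Σ_{i=1}^{t−1} f_i(x) + g_t(x) − ⟨σ, x⟩ ) + γ, and suppose x̄_2, …, x̄_{T+1} ∈ X are such that x̄_{t+1} exactly minimizes x ↦ Σ_{i=1}^{t} f_i(x) − ⟨σ, x⟩ over X. Then for every x* ∈ X, Σ_{t=1}^T ( g_t(x_t) − g_t(x̄_{t+1}) ) + Σ_{t=1}^T ( f_t(x̄_{t+1}) − f_t(x*) ) ≤ ⟨σ, x̄_2 − x*⟩ + γ(T − 1). -/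
import Mathlib


open MeasureTheory

noncomputable section

/-- Standard inner product on `ℝ^d`. -/
def dotp {d : ℕ} (σ x : Fin d → ℝ) : ℝ := ∑ i, σ i * x i

/-- ℓ1 norm on `ℝ^d`. -/
def l1 {d : ℕ} (x : Fin d → ℝ) : ℝ := ∑ i, |x i|

/-- The `i`-th standard basis vector of `ℝ^d`. -/
def stdBasis {d : ℕ} (i : Fin d) : Fin d → ℝ := Pi.single i 1

/-- **Optimistic perturbed be-the-leader inequality.** Rounds are indexed `0, …, T-1` and
`g 0 = 0`. For each round `t`, `x t` is a `γ`-approximate minimizer over `X` of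
`∑_{i < t} f i (·) + g t (·) - ⟨σ,·⟩` (the guess-augmented perturbed cumulative loss), and
`xb (t+1)` exactly minimizes `∑_{i ≤ t} f i (·) - ⟨σ,·⟩` over `X`. -/
theorem optimistic_perturbed_be_the_leader {d : ℕ} (X : Set (Fin d → ℝ)) (σ : Fin d → ℝ)
    (γ : ℝ) (hγ : 0 ≤ γ) (T : ℕ) (hT : 1 ≤ T)
    (f g : ℕ → (Fin d → ℝ) → ℝ) (hg0 : g 0 = 0)
    (x xb : ℕ → Fin d → ℝ)
    (hxX : ∀ t < T, x t ∈ X)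
    (hx : ∀ t < T, ∀ z ∈ X,
      (∑ i ∈ Finset.range t, f i (x t)) + g t (x t) - dotp σ (x t) ≤
        (∑ i ∈ Finset.range t, f i z) + g t z - dotp σ z + γ)
    (hxbX : ∀ t < T, xb (t + 1) ∈ X)
    (hxb : ∀ t < T, ∀ z ∈ X,
      (∑ i ∈ Finset.range (t + 1), f i (xb (t + 1))) - dotp σ (xb (t + 1)) ≤
        (∑ i ∈ Finset.range (t + 1), f i z) - dotp σ z) :
    ∀ xstar ∈ X,
      (∑ t ∈ Finset.range T, (g t (x t) - g t (xb (t + 1)))) +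
          (∑ t ∈ Finset.range T, (f t (xb (t + 1)) - f t xstar)) ≤
        dotp σ (xb 1 - xstar) + γ * ((T : ℝ) - 1) := by
  intro xstar hstar
  have hdot : dotp σ (xb 1 - xstar) = dotp σ (xb 1) - dotp σ xstar := by
    simp [dotp, mul_sub, Finset.sum_sub_distrib]
  have key : ∀ n, 1 ≤ n → n ≤ T →
      (∑ t ∈ Finset.range n, (g t (x t) - g t (xb (t + 1)) + f t (xb (t + 1)))) ≤
        (∑ i ∈ Finset.range n, f i (xb n)) - dotp σ (xb n) + dotp σ (xb 1)
          + γ * ((n : ℝ) - 1) := by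
    intro n h1 h2
    induction n, h1 using Nat.le_induction with
    | base => simp [hg0]
    | succ n h1 ih =>
      have hnT : n < T := h2
      have ih' := ih hnT.le
      obtain ⟨m, rfl⟩ : ∃ m, n = m + 1 := ⟨n - 1, (Nat.succ_pred_eq_of_pos h1).symm⟩
      have hmin := hxb m (lt_of_lt_of_le (Nat.lt_succ_self m) hnT.le) (x (m + 1))
        (hxX (m + 1) hnT)
      have happrox := hx (m + 1) hnT (xb (m + 2)) (hxbX (m + 1) hnT)
      rw [Finset.sum_range_succ, Finset.sum_range_succ (fun i => f i (xb (m + 1 + 1)))]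
      push_cast at ih' ⊢
      linarith [ih', hmin, happrox]
  obtain ⟨S, rfl⟩ : ∃ S, T = S + 1 := ⟨T - 1, (Nat.succ_pred_eq_of_pos hT).symm⟩
  have hfin := key (S + 1) (Nat.le_add_left 1 S) le_rfl
  have hcmp := hxb S (Nat.lt_succ_self S) xstar hstar
  rw [Finset.sum_add_distrib] at hfin
  rw [hdot]
  simp only [Finset.sum_sub_distrib] at hfin ⊢
  linarith [hfin, hcmp]
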